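/- Any critical point (x, z) of H_L(x,z) = x⁴z²(L²/f(z)² - 1 + 1/x) with x, z > 0 satisfies x = 3/4 + 1/(4ν(z)²) and f(z)²/(1 + 3ν(z)²) = L²; in particular x > 1, i.e. the critical point lies outside the event horizon. -/

import Mathlib

theorem stmt_12 (f : ℝ → ℝ) (L : ℝ) (hL : 0 < L)
    (hfpos : ∀ z : ℝ, 0 < z → 0 < f z)
    (hfdiff : ∀ z : ℝ, 0 < z → DifferentiableAt ℝ f z)
    (hν : ∀ z : ℝ, 0 < z →
      0 < z * deriv f z / f z ∧ z * deriv f z / f z < 1)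
    (x z : ℝ) (hx : 0 < x) (hz : 0 < z)
    (hcx : deriv (fun x' : ℝ => x' ^ 4 * z ^ 2 * (L ^ 2 / (f z) ^ 2 - 1 + 1 / x')) x = 0)
    (hcz : deriv (fun z' : ℝ => x ^ 4 * z' ^ 2 * (L ^ 2 / (f z') ^ 2 - 1 + 1 / x)) z = 0) :
    x = 3 / 4 + 1 / (4 * (z * deriv f z / f z)) ∧
    (f z) ^ 2 / (1 + 3 * (z * deriv f z / f z)) = L ^ 2 ∧
    1 < x := by
  obtain ⟨hν1, hν2⟩ := hν z hz
  have hF : 0 < f z := hfpos z hz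
  have hFne : f z ≠ 0 := ne_of_gt hF
  have hxne : x ≠ 0 := ne_of_gt hx
  have hzne : z ≠ 0 := ne_of_gt hz
  have hzp : 0 < z * deriv f z := by
    have := mul_pos hν1 hF
    rwa [div_mul_cancel₀ _ hFne] at this
  have hzpF : z * deriv f z < f z := (div_lt_one hF).mp hν2
  -- x-derivative computation
  have hfun : (fun x' : ℝ => x' ^ 4 * z ^ 2 * (L ^ 2 / (f z) ^ 2 - 1 + 1 / x'))
      = fun x' : ℝ => z ^ 2 * ((L ^ 2 / (f z) ^ 2 - 1) * x' ^ 4 + x' ^ 3) := by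
    funext t
    rcases eq_or_ne t 0 with h | h
    · simp [h]
    · field_simp
  rw [hfun] at hcx
  have hdx : HasDerivAt (fun x' : ℝ => z ^ 2 * ((L ^ 2 / (f z) ^ 2 - 1) * x' ^ 4 + x' ^ 3))
      (z ^ 2 * ((L ^ 2 / (f z) ^ 2 - 1) * (4 * x ^ 3) + 3 * x ^ 2)) x := by
    have h1 := (hasDerivAt_pow 4 x).const_mul (L ^ 2 / (f z) ^ 2 - 1)
    have h2 := hasDerivAt_pow 3 x
    have := (h1.add h2).const_mul (z ^ 2)
    exact this.congr_deriv (by norm_num)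
  rw [hdx.deriv] at hcx
  have hA : (L ^ 2 / (f z) ^ 2 - 1) * (4 * x) + 3 = 0 := by
    have h1 : (L ^ 2 / (f z) ^ 2 - 1) * (4 * x ^ 3) + 3 * x ^ 2 = 0 := by
      rcases mul_eq_zero.mp hcx with h | h
      · exact absurd h (pow_ne_zero 2 hzne)
      · exact h
    have h2 : x ^ 2 * ((L ^ 2 / (f z) ^ 2 - 1) * (4 * x) + 3) = 0 := by linear_combination h1
    rcases mul_eq_zero.mp h2 with h | h
    · exact absurd h (pow_ne_zero 2 hxne)
    · exact h
  have heA : L ^ 2 * (4 * x) - (f z) ^ 2 * (4 * x) + 3 * (f z) ^ 2 = 0 := by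
    field_simp at hA
    linarith
  -- z-derivative computation
  have hf : HasDerivAt f (deriv f z) z := (hfdiff z hz).hasDerivAt
  have h1 : HasDerivAt (fun z' => (f z') ^ 2) (2 * f z * deriv f z) z := by
    have := hf.pow 2
    exact this.congr_deriv (by norm_num)
  have h2 : HasDerivAt (fun z' => L ^ 2 / (f z') ^ 2)
      ((0 * (f z) ^ 2 - L ^ 2 * (2 * f z * deriv f z)) / ((f z) ^ 2) ^ 2) z :=
    (hasDerivAt_const z (L ^ 2)).div h1 (pow_ne_zero 2 hFne)
  have h3 : HasDerivAt (fun z' => L ^ 2 / (f z') ^ 2 - 1 + 1 / x)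
      ((0 * (f z) ^ 2 - L ^ 2 * (2 * f z * deriv f z)) / ((f z) ^ 2) ^ 2) z := by
    simpa using (h2.sub_const 1).add_const (1 / x)
  have h4 : HasDerivAt (fun z' : ℝ => z' ^ 2) (2 * z) z := by
    simpa using hasDerivAt_pow 2 z
  have hfeq : (fun z' : ℝ => x ^ 4 * z' ^ 2 * (L ^ 2 / (f z') ^ 2 - 1 + 1 / x))
      = fun z' : ℝ => x ^ 4 * (z' ^ 2 * (L ^ 2 / (f z') ^ 2 - 1 + 1 / x)) := by
    funext t; ring
  rw [hfeq] at hcz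
  have h5 := ((h4.mul h3).const_mul (x ^ 4)).deriv
  simp only [Pi.mul_apply] at h5
  rw [h5] at hcz
  have h6 : 2 * z * (L ^ 2 / (f z) ^ 2 - 1 + 1 / x)
      + z ^ 2 * ((0 * (f z) ^ 2 - L ^ 2 * (2 * f z * deriv f z)) / ((f z) ^ 2) ^ 2) = 0 := by
    rcases mul_eq_zero.mp hcz with h | h
    · exact absurd h (pow_ne_zero 4 hxne)
    · linarith [h]
  have heB : x * L ^ 2 * f z - x * (f z) ^ 3 + (f z) ^ 3 - x * z * L ^ 2 * deriv f z = 0 := by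
    have h7 : 2 * z * (f z) ^ 3 * (x * L ^ 2 * f z - x * (f z) ^ 3 + (f z) ^ 3
        - x * z * L ^ 2 * deriv f z) = 0 := by
      field_simp at h6
      linear_combination (f z ^ 3) * h6
    rcases mul_eq_zero.mp h7 with h | h
    · exact absurd h (by positivity)
    · exact h
  -- key relation: f z = z * deriv f z * (4x - 3)
  have hkey0 : x * (f z) ^ 2 * (f z - z * deriv f z * (4 * x - 3)) = 0 := by
    linear_combination (x * (z * deriv f z) - x * f z) * heA + (4 * x) * heB
  have hkey : f z = z * deriv f z * (4 * x - 3) := by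
    rcases mul_eq_zero.mp hkey0 with h | h
    · exact absurd h (by positivity)
    · linarith
  have hzpne : z * deriv f z ≠ 0 := ne_of_gt hzp
  have hg1 : x = 3 / 4 + 1 / (4 * (z * deriv f z / f z)) := by
    have hd : deriv f z ≠ 0 := right_ne_zero_of_mul hzpne
    field_simp
    linear_combination (-1) * hkey
  refine ⟨hg1, ?_, ?_⟩
  · have hT4 : 4 * x * ((f z) ^ 3 - L ^ 2 * f z - 3 * L ^ 2 * (z * deriv f z)) = 0 := by
      linear_combination 3 * (f z) ^ 2 * hkey - (f z + 3 * (z * deriv f z)) * heA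
    have hT : (f z) ^ 3 - L ^ 2 * f z - 3 * L ^ 2 * (z * deriv f z) = 0 := by
      rcases mul_eq_zero.mp hT4 with h | h
      · exact absurd h (by positivity)
      · exact h
    have hden : (1 : ℝ) + 3 * (z * deriv f z / f z) ≠ 0 := by positivity
    have hden' : f z + 3 * z * deriv f z ≠ 0 := ne_of_gt (by linarith)
    field_simp
    linear_combination hT
  · rw [hg1]
    have h8 : 0 < 4 * (z * deriv f z / f z) := by positivity
    have h9 : 4 * (z * deriv f z / f z) < 4 := by linarith
    nlinarith [one_div_lt_one_div_of_lt h8 h9]
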